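/- Let l ≥ 1 and let D_1 be a finite-dimensional F_2-vector space with linear maps ∂^D_1 : D_1 → D_0 and γ_1 : D_1 → C_1 with γ_1 ω-bounded. Consider u'' = Σ_{j=1}^l d_j ⊗ e_j ∈ D_1 ⊗ F_2^l and the product boundary ∂ u'' = Σ_j (∂^D_1 d_j) ⊗ e_j ⊕ Σ_j d_j ⊗ ∂^R_1 e_j where ∂^R_1 is the length-l repetition code boundary. Fix j_⋆ ∈ {1,…,l} and set Δ = max_j ‖d_{j_⋆} − d_j‖ (Hamming weight of the symmetric difference, i.e., of d_{j_⋆}+d_j over F_2). Then: (a) if Δ < ‖d_{j_⋆}‖ and ‖d_{j_⋆}‖ > 0, then ‖∂ u''‖ ≥ l; (b) if Δ ≥ ‖d_{j_⋆}‖, then ‖∂ u''‖ ≥ Σ_{j=1}^{l−1} ‖d_j + d_{j+1}‖ ≥ Δ ≥ ‖d_{j_⋆}‖. In either case ‖∂ u''‖ ≥ min(‖γ_1(d_{j_⋆})‖/ω, l). -/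

import Mathlib

open Matrix Finset

private lemma hn_add_eq_dist {n1 : ℕ} (x y : Fin n1 → ZMod 2) :
    hammingNorm (x + y) = hammingDist x y := by
  rw [hammingDist_eq_hammingNorm]
  congr 1
  funext i
  exact congrArg (· + y i) (CharTwo.neg_eq (x i)).symm

private lemma tele_ico {n1 : ℕ} (D : ℕ → Fin n1 → ZMod 2) :
    ∀ i j, i ≤ j → hammingDist (D i) (D j) ≤
      ∑ k ∈ Finset.Ico i j, hammingDist (D k) (D (k + 1)) := by
  intro i j hij
  induction j, hij using Nat.le_induction with
  | base => simp
  | succ j hij ih =>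
    rw [Finset.sum_Ico_succ_top hij]
    calc hammingDist (D i) (D (j + 1))
        ≤ hammingDist (D i) (D j) + hammingDist (D j) (D (j + 1)) :=
          hammingDist_triangle _ _ _
      _ ≤ _ := by omega

/-- Expansion boosting via the repetition code: for `u'' = Σ_j d_j ⊗ e_j` with product
boundary `∂u'' = Σ_j (∂^D₁ d_j) ⊗ e_j ⊕ Σ_j d_j ⊗ ∂^R₁ e_j` (of Hamming weight
`Σ_j ‖∂^D₁ d_j‖ + Σ_{j<l} ‖d_j + d_{j+1}‖`, `l = m+1`), distinguished index `j⋆` and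
`Δ = max_j ‖d_{j⋆} + d_j‖`:
(a) if `Δ < ‖d_{j⋆}‖` and `‖d_{j⋆}‖ > 0` then `‖∂u''‖ ≥ l`;
(b) if `Δ ≥ ‖d_{j⋆}‖` then `‖∂u''‖ ≥ Σ_j ‖d_j + d_{j+1}‖ ≥ Δ ≥ ‖d_{j⋆}‖`;
in either case `‖∂u''‖ ≥ min(‖γ₁ d_{j⋆}‖/ω, l)`. -/
theorem stmt11 (m n1 n0 c1 : ℕ) (ω : ℝ) (hω : 0 < ω)
    (dD1 : Matrix (Fin n0) (Fin n1) (ZMod 2))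
    (γ1 : Matrix (Fin c1) (Fin n1) (ZMod 2))
    (hbγ1 : ∀ x, (hammingNorm (γ1.mulVec x) : ℝ) ≤ ω * hammingNorm x)
    (d : Fin (m + 1) → Fin n1 → ZMod 2) (jstar : Fin (m + 1))
    -- after cleaning by cycles: no nonzero d_j lies in ker ∂^D₁ in case (a)
    (hclean : (univ.sup (fun j => hammingNorm (d jstar + d j)) <
          hammingNorm (d jstar)) →
        ∀ j, d j ≠ 0 → 1 ≤ hammingNorm (dD1.mulVec (d j))) :
    -- (a)
    ((univ.sup (fun j => hammingNorm (d jstar + d j)) < hammingNorm (d jstar) ∧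
        0 < hammingNorm (d jstar)) →
      m + 1 ≤ ∑ j, hammingNorm (dD1.mulVec (d j)) +
        ∑ k : Fin m, hammingNorm (d k.castSucc + d k.succ)) ∧
    -- (b)
    ((hammingNorm (d jstar) ≤ univ.sup (fun j => hammingNorm (d jstar + d j))) →
      (∑ k : Fin m, hammingNorm (d k.castSucc + d k.succ) ≤
          ∑ j, hammingNorm (dD1.mulVec (d j)) +
            ∑ k : Fin m, hammingNorm (d k.castSucc + d k.succ) ∧
        univ.sup (fun j => hammingNorm (d jstar + d j)) ≤
          ∑ k : Fin m, hammingNorm (d k.castSucc + d k.succ) ∧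
        hammingNorm (d jstar) ≤
          univ.sup (fun j => hammingNorm (d jstar + d j)))) ∧
    -- in either case
    (min ((hammingNorm (γ1.mulVec (d jstar)) : ℝ) / ω) ((m : ℝ) + 1) ≤
      ((∑ j, hammingNorm (dD1.mulVec (d j)) +
        ∑ k : Fin m, hammingNorm (d k.castSucc + d k.succ) : ℕ) : ℝ)) := by
  -- extend d to ℕ
  set D : ℕ → Fin n1 → ZMod 2 := fun i => d ⟨min i m, by omega⟩ with hD
  have hDfin : ∀ j : Fin (m + 1), D j.val = d j := by
    intro j
    have : min j.val m = j.val := by omega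
    simp [hD, this]
  -- the second sum equals a range sum of consecutive distances of D
  have hsum_eq : ∑ k : Fin m, hammingNorm (d k.castSucc + d k.succ) =
      ∑ k ∈ Finset.range m, hammingDist (D k) (D (k + 1)) := by
    rw [Finset.sum_range fun k => hammingDist (D k) (D (k + 1))]
    refine Finset.sum_congr rfl fun k _ => ?_
    have hk := k.isLt
    have h1 : D (k : ℕ) = d k.castSucc := by
      simp only [hD]
      apply congrArg
      apply Fin.ext
      show min (k : ℕ) m = (k : ℕ)
      omega
    have h2 : D ((k : ℕ) + 1) = d k.succ := by
      simp only [hD]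
      apply congrArg
      apply Fin.ext
      show min ((k : ℕ) + 1) m = (k : ℕ) + 1
      omega
    rw [hn_add_eq_dist, h1, h2]
  -- telescoping bound
  have htele : ∀ j : Fin (m + 1), hammingNorm (d jstar + d j) ≤
      ∑ k : Fin m, hammingNorm (d k.castSucc + d k.succ) := by
    intro j
    rw [hn_add_eq_dist, hsum_eq]
    rcases le_total jstar.val j.val with h | h
    · calc hammingDist (d jstar) (d j) = hammingDist (D jstar.val) (D j.val) := by
            rw [hDfin, hDfin]
        _ ≤ ∑ k ∈ Finset.Ico jstar.val j.val, hammingDist (D k) (D (k + 1)) :=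
            tele_ico D _ _ h
        _ ≤ _ := Finset.sum_le_sum_of_subset (by
            intro k hk
            simp only [Finset.mem_Ico, Finset.mem_range] at *
            omega)
    · calc hammingDist (d jstar) (d j) = hammingDist (D j.val) (D jstar.val) := by
            rw [hDfin, hDfin, hammingDist_comm]
        _ ≤ ∑ k ∈ Finset.Ico j.val jstar.val, hammingDist (D k) (D (k + 1)) :=
            tele_ico D _ _ h
        _ ≤ _ := Finset.sum_le_sum_of_subset (by
            intro k hk
            simp only [Finset.mem_Ico, Finset.mem_range] at *
            omega)
  have hsup_le : univ.sup (fun j => hammingNorm (d jstar + d j)) ≤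
      ∑ k : Fin m, hammingNorm (d k.castSucc + d k.succ) :=
    Finset.sup_le fun j _ => htele j
  -- part (a)
  have parta : (univ.sup (fun j => hammingNorm (d jstar + d j)) <
        hammingNorm (d jstar) ∧ 0 < hammingNorm (d jstar)) →
      m + 1 ≤ ∑ j, hammingNorm (dD1.mulVec (d j)) +
        ∑ k : Fin m, hammingNorm (d k.castSucc + d k.succ) := by
    rintro ⟨hlt, -⟩
    have h1 : m + 1 ≤ ∑ j, hammingNorm (dD1.mulVec (d j)) := by
      have : ∀ j ∈ (univ : Finset (Fin (m + 1))), 1 ≤ hammingNorm (dD1.mulVec (d j)) := by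
        intro j _
        refine hclean hlt j fun h0 => ?_
        have := Finset.le_sup (f := fun j => hammingNorm (d jstar + d j))
          (Finset.mem_univ j)
        simp only [h0, add_zero] at this
        omega
      calc m + 1 = ∑ _j : Fin (m + 1), 1 := by simp
        _ ≤ _ := Finset.sum_le_sum this
    omega
  refine ⟨parta, fun hge => ⟨Nat.le_add_left _ _, hsup_le, hge⟩, ?_⟩
  -- final real inequality
  rcases lt_or_ge (univ.sup (fun j => hammingNorm (d jstar + d j)))
      (hammingNorm (d jstar)) with hlt | hge
  · have hpos : 0 < hammingNorm (d jstar) := by omega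
    have h := parta ⟨hlt, hpos⟩
    refine le_trans (min_le_right _ _) ?_
    push_cast
    exact_mod_cast (by exact_mod_cast h : ((m : ℝ) + 1) ≤ ((∑ j, hammingNorm (dD1.mulVec (d j)) +
        ∑ k : Fin m, hammingNorm (d k.castSucc + d k.succ) : ℕ) : ℝ))
  · refine le_trans (min_le_left _ _) ?_
    have h1 : (hammingNorm (γ1.mulVec (d jstar)) : ℝ) / ω ≤ hammingNorm (d jstar) := by
      rw [div_le_iff₀ hω]
      calc (hammingNorm (γ1.mulVec (d jstar)) : ℝ) ≤ ω * hammingNorm (d jstar) :=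
            hbγ1 _
        _ = hammingNorm (d jstar) * ω := mul_comm _ _
    refine le_trans h1 ?_
    have h2 : hammingNorm (d jstar) ≤ ∑ j, hammingNorm (dD1.mulVec (d j)) +
        ∑ k : Fin m, hammingNorm (d k.castSucc + d k.succ) := by omega
    exact_mod_cast h2
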